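/- arXiv:1707.01975 — 9 statements merged into one kernel-verified Lean document; each statement's English description precedes it below -/
import Mathlib

section
/- For all nonnegative integers n and positive integers k, the identity (-1)^(n-1) * C(n+k, n-1) + ∑_{j=n}^{n+k} (-1)^j * C(n+k, j) * C(j, n) * ((j-n+1) - (j-n)*n)/(j-n+1) = 0 holds in the rationals. -/
lemma altQ (k : ℕ) (hk : k ≠ 0) :
    ∑ i ∈ Finset.range (k+1), (-1:ℚ)^i * (k.choose i : ℚ) = 0 := by
  have h := Int.alternating_sum_range_choose_of_ne hk
  have h2 : (((∑ m ∈ Finset.range (k+1), ((-1)^m * k.choose m : ℤ)) : ℤ) : ℚ) = 0 := by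
    rw [h]; simp
  push_cast at h2
  exact h2

lemma S1 (k : ℕ) :
    ∑ i ∈ Finset.range (k+1), (-1:ℚ)^i * (k.choose i : ℚ) / (i+1) = 1/(k+1) := by
  have key : ∀ i : ℕ, ((k.choose i : ℚ)) / (i+1) = ((k+1).choose (i+1) : ℚ) / (k+1) := by
    intro i
    have h := Nat.add_one_mul_choose_eq k i
    have h' : ((k:ℚ)+1) * (k.choose i : ℚ) = ((k+1).choose (i+1) : ℚ) * ((i:ℚ)+1) := by
      exact_mod_cast h
    rw [div_eq_div_iff (by positivity) (by positivity)]
    linarith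
  have hsum : ∑ i ∈ Finset.range (k+1), (-1:ℚ)^i * ((k+1).choose (i+1) : ℚ) = 1 := by
    have h := Int.alternating_sum_range_choose_of_ne (Nat.succ_ne_zero k)
    have h2 : (((∑ m ∈ Finset.range (k+2), ((-1)^m * (k+1).choose m : ℤ)) : ℤ) : ℚ) = 0 := by
      rw [h]; simp
    push_cast at h2
    rw [Finset.sum_range_succ' _ (k+1)] at h2
    simp only [pow_succ, pow_zero, Nat.choose_zero_right, Nat.cast_one, one_mul, mul_one] at h2
    have : ∑ i ∈ Finset.range (k+1), (-1:ℚ)^i * (-1) * ((k+1).choose (i+1) : ℚ) = -1 := by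
      linarith
    calc ∑ i ∈ Finset.range (k+1), (-1:ℚ)^i * ((k+1).choose (i+1) : ℚ)
        = -∑ i ∈ Finset.range (k+1), (-1:ℚ)^i * (-1) * ((k+1).choose (i+1) : ℚ) := by
          rw [← Finset.sum_neg_distrib]; apply Finset.sum_congr rfl; intros; ring
      _ = 1 := by rw [this]; ring
  calc ∑ i ∈ Finset.range (k+1), (-1:ℚ)^i * (k.choose i : ℚ) / (i+1)
      = ∑ i ∈ Finset.range (k+1), (-1:ℚ)^i * ((k+1).choose (i+1) : ℚ) / (k+1) := by
        apply Finset.sum_congr rfl; intro i _; rw [mul_div_assoc, key i, mul_div_assoc]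
    _ = 1/(k+1) := by rw [← Finset.sum_div, hsum]

theorem stmt4 (n k : ℕ) (hk : 0 < k) :
    (-1 : ℚ) ^ (n - 1) * (if n = 0 then 0 else ((n + k).choose (n - 1) : ℚ)) +
      ∑ j ∈ Finset.Icc n (n + k),
        (-1 : ℚ) ^ j * ((n + k).choose j : ℚ) * (j.choose n : ℚ) *
          ((((j - n + 1 : ℕ) : ℚ) - ((j - n : ℕ) : ℚ) * (n : ℚ)) / ((j - n + 1 : ℕ) : ℚ)) = 0 := by
  rw [← Finset.Ico_add_one_right_eq_Icc, Finset.sum_Ico_eq_sum_range]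
  simp only [show n + k + 1 - n = k + 1 from by omega, add_tsub_cancel_left]
  have hterm : ∀ i ∈ Finset.range (k+1),
      (-1:ℚ)^(n+i) * ((n+k).choose (n+i) : ℚ) * ((n+i).choose n : ℚ) *
        ((((i+1:ℕ):ℚ) - ((i:ℕ):ℚ)*(n:ℚ)) / ((i+1:ℕ):ℚ)) =
      (-1:ℚ)^n * ((n+k).choose n : ℚ) *
        ((1 - (n:ℚ)) * ((-1:ℚ)^i * (k.choose i : ℚ)) +
          (n:ℚ) * ((-1:ℚ)^i * (k.choose i : ℚ) / (i+1))) := by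
    intro i hi
    have hi' : i ≤ k := Nat.lt_succ_iff.mp (Finset.mem_range.mp hi)
    have hch : ((n+k).choose (n+i) : ℚ) * ((n+i).choose n : ℚ) =
        ((n+k).choose n : ℚ) * (k.choose i : ℚ) := by
      have h := Nat.choose_mul (n := n + k) (Nat.le_add_right n i)
      simp only [add_tsub_cancel_left] at h
      exact_mod_cast h
    have h1 : ((i:ℚ)+1) ≠ 0 := by positivity
    push_cast
    rw [pow_add]
    field_simp
    linear_combination ((1:ℚ) + i - i*n) * hch
  rw [Finset.sum_congr rfl hterm, ← Finset.mul_sum, Finset.sum_add_distrib,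
    ← Finset.mul_sum, ← Finset.mul_sum, altQ k hk.ne', S1 k]
  rcases n with _ | s
  · simp
  · rw [if_neg (Nat.succ_ne_zero s)]
    simp only [Nat.succ_sub_one]
    have hc : ((s+1+k).choose (s+1) : ℚ) * ((s:ℚ)+1) = ((s+1+k).choose s : ℚ) * ((k:ℚ)+1) := by
      have h := Nat.choose_succ_right_eq (s+1+k) s
      have h2 : s + 1 + k - s = k + 1 := by omega
      rw [h2] at h
      exact_mod_cast h
    have hk1 : ((k:ℚ)+1) ≠ 0 := by positivity
    push_cast
    field_simp
    rw [pow_succ]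
    linear_combination (-(-1:ℚ)^s) * hc
end

section
/- Let n be a nonnegative integer and i, i' distinct positive integers. In the polynomial ring ℂ[α, c], the linear polynomial α + (i - i')c divides C(n+i, n) * ∏_{l=i+1}^{i+n} (α + l·c) - C(n+i', n) * ∏_{l=i'+1}^{i'+n} (-α + l·c), where i > i'. -/
open MvPolynomial Finset Nat

lemma fact_prod_aux (m n : ℕ) : m ! * ∏ l ∈ Finset.Icc (m+1) (m+n), l = (m+n)! := by
  induction n with
  | zero => simp
  | succ k ih =>
    rw [show m + (k+1) = (m+k) + 1 from rfl,
      Finset.prod_Icc_succ_top (by omega : m + 1 ≤ m + k + 1)]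
    rw [← mul_assoc, ih]
    rw [Nat.factorial_succ]
    ring

lemma key_nat (n i j : ℕ) :
    (n+i).choose n * ∏ l ∈ Finset.Icc (j+1) (j+n), l
    = (n+j).choose n * ∏ l ∈ Finset.Icc (i+1) (i+n), l := by
  apply Nat.eq_of_mul_eq_mul_left (show 0 < n ! * i ! * j ! from by positivity)
  have e1 : (n+i).choose n * n ! * i ! = (n+i)! := by
    have := Nat.choose_mul_factorial_mul_factorial (Nat.le_add_right n i)
    simpa using this
  have e2 : (n+j).choose n * n ! * j ! = (n+j)! := by
    have := Nat.choose_mul_factorial_mul_factorial (Nat.le_add_right n j)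
    simpa using this
  calc n ! * i ! * j ! * ((n+i).choose n * ∏ l ∈ Finset.Icc (j+1) (j+n), l)
      = ((n+i).choose n * n ! * i !) * (j ! * ∏ l ∈ Finset.Icc (j+1) (j+n), l) := by ring
    _ = (n+i)! * (j+n)! := by rw [e1, fact_prod_aux]
    _ = ((n+j).choose n * n ! * j !) * (i ! * ∏ l ∈ Finset.Icc (i+1) (i+n), l) := by
        rw [e2, fact_prod_aux]; rw [show j+n = n+j from by ring, show i+n = n+i from by ring]
        ring
    _ = n ! * i ! * j ! * ((n+j).choose n * ∏ l ∈ Finset.Icc (i+1) (i+n), l) := by ring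

lemma reindex1 (n i j : ℕ) (h : j ≤ i) :
    ∏ l ∈ Finset.Icc (i+1) (i+n), ((l:ℂ) - ((i:ℂ) - (j:ℂ)))
    = ∏ l ∈ Finset.Icc (j+1) (j+n), (l:ℂ) := by
  have hmap : Finset.Icc (i+1) (i+n) =
      Finset.map (addLeftEmbedding (i - j)) (Finset.Icc (j+1) (j+n)) := by
    rw [Finset.map_add_left_Icc]
    congr 1 <;> omega
  rw [hmap, Finset.prod_map]
  apply Finset.prod_congr rfl
  intro l hl
  simp only [addLeftEmbedding_apply]
  have : ((i - j : ℕ) : ℂ) = (i:ℂ) - (j:ℂ) := Nat.cast_sub h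
  push_cast
  rw [this]
  ring

lemma reindex2 (n i j : ℕ) (h : j ≤ i) :
    ∏ l ∈ Finset.Icc (j+1) (j+n), ((l:ℂ) + ((i:ℂ) - (j:ℂ)))
    = ∏ l ∈ Finset.Icc (i+1) (i+n), (l:ℂ) := by
  have hmap : Finset.Icc (i+1) (i+n) =
      Finset.map (addLeftEmbedding (i - j)) (Finset.Icc (j+1) (j+n)) := by
    rw [Finset.map_add_left_Icc]
    congr 1 <;> omega
  rw [hmap, Finset.prod_map]
  apply Finset.prod_congr rfl
  intro l hl
  simp only [addLeftEmbedding_apply]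
  have : ((i - j : ℕ) : ℂ) = (i:ℂ) - (j:ℂ) := Nat.cast_sub h
  push_cast
  rw [this]
  ring

lemma key_complex (n i j : ℕ) (h : j ≤ i) :
    (((n + i).choose n : ℕ) : ℂ) * ∏ l ∈ Finset.Icc (i+1) (i+n), ((l:ℂ) - ((i:ℂ) - (j:ℂ)))
    = (((n + j).choose n : ℕ) : ℂ) * ∏ l ∈ Finset.Icc (j+1) (j+n), ((l:ℂ) + ((i:ℂ) - (j:ℂ))) := by
  rw [reindex1 n i j h, reindex2 n i j h]
  have := key_nat n i j
  have h2 : ((((n+i).choose n) * ∏ l ∈ Finset.Icc (j+1) (j+n), l : ℕ) : ℂ)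
      = ((((n+j).choose n) * ∏ l ∈ Finset.Icc (i+1) (i+n), l : ℕ) : ℂ) := by exact_mod_cast this
  push_cast at h2
  convert h2 using 2

theorem stmt6 (n : ℕ) (i i' : ℕ) (hi : 0 < i') (hii' : i' < i) :
    let α : MvPolynomial (Fin 2) ℂ := X 0
    let c : MvPolynomial (Fin 2) ℂ := X 1
    (α + C ((i : ℂ) - (i' : ℂ)) * c) ∣
      (C (((n + i).choose n : ℕ) : ℂ) * ∏ l ∈ Finset.Icc (i + 1) (i + n), (α + C (l : ℂ) * c)
        - C (((n + i').choose n : ℕ) : ℂ) * ∏ l ∈ Finset.Icc (i' + 1) (i' + n), (-α + C (l : ℂ) * c)) := by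
  intro α c
  set d : ℂ := (i:ℂ) - (i':ℂ) with hd
  rw [← map_dvd_iff (finSuccEquiv ℂ 1)]
  have h0 : finSuccEquiv ℂ 1 (X 0) = Polynomial.X := finSuccEquiv_X_zero
  have h1 : finSuccEquiv ℂ 1 (X 1 : MvPolynomial (Fin 2) ℂ) = Polynomial.C (X 0) := by
    have := finSuccEquiv_X_succ (R := ℂ) (n := 1) (j := 0)
    simpa using this
  have hC : ∀ r : ℂ, finSuccEquiv ℂ 1 (C r) = Polynomial.C (C r) := fun r => by
    simp [finSuccEquiv_apply]
  simp only [α, c, map_sub, map_mul, map_add, map_neg, map_prod, h0, h1, hC]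
  have hlin : Polynomial.X + Polynomial.C (C d) * Polynomial.C ((X 0 : MvPolynomial (Fin 1) ℂ))
      = Polynomial.X - Polynomial.C (-(C d * X 0)) := by
    rw [map_neg, sub_neg_eq_add, map_mul]
  rw [hlin, Polynomial.dvd_iff_isRoot, Polynomial.IsRoot]
  simp only [Polynomial.eval_sub, Polynomial.eval_mul, Polynomial.eval_prod, Polynomial.eval_add,
    Polynomial.eval_neg, Polynomial.eval_X, Polynomial.eval_C, neg_neg]
  have p1 : ∀ l : ℕ, -(C d * X 0) + C (l:ℂ) * (X 0 : MvPolynomial (Fin 1) ℂ)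
      = C ((l:ℂ) - d) * X 0 := fun l => by simp only [map_sub, map_add]; ring
  have p2 : ∀ l : ℕ, C d * X 0 + C (l:ℂ) * (X 0 : MvPolynomial (Fin 1) ℂ)
      = C ((l:ℂ) + d) * X 0 := fun l => by simp only [map_sub, map_add]; ring
  rw [Finset.prod_congr rfl (fun l _ => p1 l), Finset.prod_congr rfl (fun l _ => p2 l),
    Finset.prod_mul_distrib, Finset.prod_mul_distrib, Finset.prod_const, Finset.prod_const,
    Nat.card_Icc, Nat.card_Icc, show i + n + 1 - (i + 1) = n from by omega,
    show i' + n + 1 - (i' + 1) = n from by omega, ← map_prod, ← map_prod]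
  have hkey := key_complex n i i' (le_of_lt hii')
  rw [← mul_assoc, ← mul_assoc, ← map_mul, ← map_mul, hkey, sub_self]
end

section
/- Let n be a positive integer and i' a positive integer. In ℂ[α, c], the polynomial -α + i'·c divides (a_{i',n}·α + i'·b_{i',n}·c) * ∏_{l=i'+1}^{i'+n-1}(-α + l·c) - ∏_{l=0}^{n-1}(α + l·c), where a_{i',n} = C(n+i'-1, n)*(n-1) and b_{i',n} = C(n+i'-1, n)*(i' - (i'-1)n)/i'. -/
open MvPolynomial

lemma asc_prod (i' : ℕ) : ∀ n : ℕ, (∏ l ∈ Finset.range n, (i' + l)) = i'.ascFactorial n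
  | 0 => rfl
  | n + 1 => by
      rw [Finset.prod_range_succ, asc_prod i' n, Nat.ascFactorial, mul_comm]

lemma nat_prod_icc (n i' : ℕ) (hn : 0 < n) :
    (∏ l ∈ Finset.Icc (i' + 1) (i' + n - 1), (l - i')) = Nat.factorial (n - 1) := by
  have h : i' + n - 1 = i' + (n - 1) := by omega
  rw [h, ← Finset.map_add_left_Icc 1 (n - 1) i', Finset.prod_map]
  have : ∀ x ∈ Finset.Icc 1 (n - 1), (addLeftEmbedding i') x - i' = x := by
    intro x _; simp [addLeftEmbedding]
  rw [Finset.prod_congr rfl this, ← Finset.Ico_add_one_right_eq_Icc, Finset.prod_Ico_id_eq_factorial]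

theorem stmt9 (n i' : ℕ) (hn : 0 < n) (hi' : 0 < i') :
    let α : MvPolynomial (Fin 2) ℂ := X 0
    let c : MvPolynomial (Fin 2) ℂ := X 1
    let a : ℂ := ((n + i' - 1).choose n : ℂ) * ((n : ℂ) - 1)
    let b : ℂ := ((n + i' - 1).choose n : ℂ) * (((i' : ℂ) - ((i' - 1 : ℕ) : ℂ) * (n : ℂ)) / (i' : ℂ))
    (-α + C (i' : ℂ) * c) ∣
      ((C a * α + C ((i' : ℂ) * b) * c) * ∏ l ∈ Finset.Icc (i' + 1) (i' + n - 1), (-α + C (l : ℂ) * c)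
        - ∏ l ∈ Finset.range n, (α + C (l : ℂ) * c)) := by
  intro α c a b
  rw [← map_dvd_iff (finSuccEquiv ℂ 1)]
  have hC : ∀ x : ℂ, finSuccEquiv ℂ 1 (C x) = Polynomial.C (C x) := fun x => by
    simp [finSuccEquiv_apply]
  have h1 : (1 : Fin 2) = Fin.succ 0 := rfl
  simp only [map_sub, map_add, map_mul, map_neg, map_prod, α, c, h1,
    finSuccEquiv_X_zero, finSuccEquiv_X_succ, hC]
  have hdvd : (-Polynomial.X + Polynomial.C (MvPolynomial.C (i':ℂ)) *
      Polynomial.C (MvPolynomial.X 0) : Polynomial (MvPolynomial (Fin 1) ℂ)) =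
      -(Polynomial.X - Polynomial.C (MvPolynomial.C (i':ℂ) * MvPolynomial.X 0)) := by
    rw [map_mul]; ring
  rw [hdvd]
  rw [neg_dvd (α := Polynomial (MvPolynomial (Fin 1) ℂ))]
  rw [Polynomial.dvd_iff_isRoot, Polynomial.IsRoot]
  simp only [Polynomial.eval_sub, Polynomial.eval_mul, Polynomial.eval_add, Polynomial.eval_neg,
    Polynomial.eval_X, Polynomial.eval_C, Polynomial.eval_prod]
  -- products
  have hprod1 : ∏ l ∈ Finset.Icc (i' + 1) (i' + n - 1),
      (-(MvPolynomial.C (i':ℂ) * MvPolynomial.X 0) + MvPolynomial.C (l:ℂ) * MvPolynomial.X 0)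
      = MvPolynomial.C ((Nat.factorial (n-1) : ℂ)) * (MvPolynomial.X 0 : MvPolynomial (Fin 1) ℂ) ^ (n-1) := by
    have step : ∀ l ∈ Finset.Icc (i' + 1) (i' + n - 1),
        (-(MvPolynomial.C (i':ℂ) * MvPolynomial.X 0) + MvPolynomial.C (l:ℂ) * MvPolynomial.X 0
          : MvPolynomial (Fin 1) ℂ) = MvPolynomial.C (((l - i' : ℕ) : ℂ)) * MvPolynomial.X 0 := by
      intro l hl
      have h := (Finset.mem_Icc.mp hl).1
      have hcast : ((l - i' : ℕ) : ℂ) = (l:ℂ) - (i':ℂ) := by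
        rw [Nat.cast_sub (by omega : i' ≤ l)]
      rw [hcast, map_sub]; ring
    rw [Finset.prod_congr rfl step, Finset.prod_mul_distrib, Finset.prod_const, ← map_prod,
      ← Nat.cast_prod, nat_prod_icc n i' hn, Nat.card_Icc,
      show i' + n - 1 + 1 - (i' + 1) = n - 1 by omega]
  have hprod2 : ∏ l ∈ Finset.range n,
      (MvPolynomial.C (i':ℂ) * MvPolynomial.X 0 + MvPolynomial.C (l:ℂ) * MvPolynomial.X 0)
      = MvPolynomial.C ((i'.ascFactorial n : ℂ)) * (MvPolynomial.X 0 : MvPolynomial (Fin 1) ℂ) ^ n := by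
    have step : ∀ l ∈ Finset.range n,
        (MvPolynomial.C (i':ℂ) * MvPolynomial.X 0 + MvPolynomial.C (l:ℂ) * MvPolynomial.X 0
          : MvPolynomial (Fin 1) ℂ) = MvPolynomial.C (((i' + l : ℕ) : ℂ)) * MvPolynomial.X 0 := by
      intro l _
      push_cast
      rw [map_add]; ring
    rw [Finset.prod_congr rfl step, Finset.prod_mul_distrib, Finset.prod_const, Finset.card_range,
      ← map_prod, ← Nat.cast_prod, asc_prod]
  rw [hprod1, hprod2]
  -- scalar identity
  have ha : a = ((n + i' - 1).choose n : ℂ) * ((n : ℂ) - 1) := rfl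
  have hb : b = ((n + i' - 1).choose n : ℂ) * (((i' : ℂ) - ((i' - 1 : ℕ) : ℂ) * (n : ℂ)) / (i' : ℂ)) := rfl
  have hi'c : (i' : ℂ) ≠ 0 := Nat.cast_ne_zero.mpr hi'.ne'
  have hK : (a * (i':ℂ) + (i':ℂ) * b) * ((Nat.factorial (n-1) : ℂ)) = ((i'.ascFactorial n : ℂ)) := by
    have hasc : i'.ascFactorial n = Nat.factorial n * (i' + n - 1).choose n :=
      Nat.ascFactorial_eq_factorial_mul_choose' i' n
    have hch : (n + i' - 1).choose n = (i' + n - 1).choose n := by rw [Nat.add_comm n i']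
    have hfact : (n : ℂ) * ((Nat.factorial (n-1) : ℂ)) = (Nat.factorial n : ℂ) := by
      exact_mod_cast congrArg (Nat.cast : ℕ → ℂ) (Nat.mul_factorial_pred hn.ne')
    have hi1 : ((i' - 1 : ℕ) : ℂ) = (i' : ℂ) - 1 := by
      rw [Nat.cast_sub hi']; norm_num
    rw [ha, hb, hi1, hasc, hch, Nat.cast_mul]
    have hdiv : (i':ℂ) * (((i' + n - 1).choose n : ℂ) * (((i':ℂ) - ((i':ℂ) - 1) * (n:ℂ)) / (i':ℂ)))
        = ((i' + n - 1).choose n : ℂ) * ((i':ℂ) - ((i':ℂ) - 1) * (n:ℂ)) := by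
      field_simp
    rw [hdiv]
    linear_combination ((i' + n - 1).choose n : ℂ) * hfact
  have hC2 : (MvPolynomial.C ((a * (i':ℂ) + (i':ℂ) * b) * ((Nat.factorial (n-1) : ℂ)))
      : MvPolynomial (Fin 1) ℂ) = MvPolynomial.C ((i'.ascFactorial n : ℂ)) := by rw [hK]
  simp only [map_mul, map_add] at hC2
  have hX : (MvPolynomial.X 0 : MvPolynomial (Fin 1) ℂ) ^ n
      = MvPolynomial.X 0 * MvPolynomial.X 0 ^ (n-1) := by
    conv_lhs => rw [show n = (n-1)+1 by omega]
    rw [pow_succ']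
  rw [hX]
  linear_combination (MvPolynomial.X 0 * (MvPolynomial.X 0 : MvPolynomial (Fin 1) ℂ) ^ (n-1)) * hC2
end

section
/- Let n be a positive integer and i, i' positive integers with i' > i. In ℂ[α, c], the polynomial -α + (i'-i)·c divides (a_{i',n}·α + i'·b_{i',n}·c) * ∏_{l=i'+1}^{i'+n-1}(-α + l·c) - b_{i,n} * ∏_{l=i}^{i+n-1}(α + l·c), where a_{i,n} = C(n+i-1, n)*(n-1) and b_{i,n} = C(n+i-1, n)*(i - (i-1)n)/i. -/
open MvPolynomial Finset

private lemma prodRangeAsc (a k : ℕ) : ∏ j ∈ range k, (a + j) = a.ascFactorial k := by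
  induction k with
  | zero => simp
  | succ m ih => rw [prod_range_succ, ih, Nat.ascFactorial_succ, mul_comm]

private lemma prodIccC (a k : ℕ) (f : ℕ → ℂ) :
    ∏ l ∈ Icc (a + 1) (a + k), f l = ∏ j ∈ range k, f (a + 1 + j) := by
  induction k with
  | zero => simp
  | succ m ih =>
      rw [← add_assoc, Finset.prod_Icc_succ_top (by omega), ih, prod_range_succ]
      rw [show a + m + 1 = a + 1 + m by omega]

private lemma natkey (n i i' : ℕ) :
    (n + i' - 1).choose n * i.ascFactorial n = (n + i - 1).choose n * i'.ascFactorial n := by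
  rw [Nat.ascFactorial_eq_factorial_mul_choose', Nat.ascFactorial_eq_factorial_mul_choose',
    show i + n - 1 = n + i - 1 by omega, show i' + n - 1 = n + i' - 1 by omega]
  ring

private lemma factor_dvd (d : ℂ) (p : MvPolynomial (Fin 2) ℂ) :
    (X 0 - C d * X 1 : MvPolynomial (Fin 2) ℂ) ∣
      p - aeval ![(C d * X 1 : MvPolynomial (Fin 2) ℂ), X 1] p := by
  induction p using MvPolynomial.induction_on with
  | C a => simp
  | add p q hp hq =>
      have h : p + q - aeval ![(C d * X 1 : MvPolynomial (Fin 2) ℂ), X 1] (p + q)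
          = (p - aeval ![(C d * X 1 : MvPolynomial (Fin 2) ℂ), X 1] p)
            + (q - aeval ![(C d * X 1 : MvPolynomial (Fin 2) ℂ), X 1] q) := by
        rw [map_add]; ring
      rw [h]; exact dvd_add hp hq
  | mul_X p j hp =>
      have h2 : (X 0 - C d * X 1 : MvPolynomial (Fin 2) ℂ) ∣
          (X j - ![(C d * X 1 : MvPolynomial (Fin 2) ℂ), X 1] j) := by
        fin_cases j <;> simp
      have h : p * X j - aeval ![(C d * X 1 : MvPolynomial (Fin 2) ℂ), X 1] (p * X j)
          = (p - aeval ![(C d * X 1 : MvPolynomial (Fin 2) ℂ), X 1] p) * X j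
            + aeval ![(C d * X 1 : MvPolynomial (Fin 2) ℂ), X 1] p
              * (X j - ![(C d * X 1 : MvPolynomial (Fin 2) ℂ), X 1] j) := by
        rw [map_mul, aeval_X]; ring
      rw [h]; exact dvd_add (hp.mul_right _) (h2.mul_left _)

private lemma asc_pull (i k : ℕ) : i.ascFactorial (k + 1) = i * (i + 1).ascFactorial k := by
  rw [← prodRangeAsc, ← prodRangeAsc, prod_range_succ']
  simp only [Nat.add_zero]
  rw [mul_comm]
  congr 1
  exact prod_congr rfl fun j _ => by omega

private lemma scalar_key (n i i' : ℕ) (hn : 0 < n) (hi : 0 < i) (hii' : i < i') :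
    (((n + i' - 1).choose n : ℂ) * ((n : ℂ) - 1) * ((i' : ℂ) - (i : ℂ))
        + (i' : ℂ) * (((n + i' - 1).choose n : ℂ)
            * (((i' : ℂ) - ((i' - 1 : ℕ) : ℂ) * (n : ℂ)) / (i' : ℂ))))
        * ∏ l ∈ Icc (i' + 1) (i' + n - 1), ((l : ℂ) - ((i' : ℂ) - (i : ℂ)))
      = ((n + i - 1).choose n : ℂ) * (((i : ℂ) - ((i - 1 : ℕ) : ℂ) * (n : ℂ)) / (i : ℂ))
        * ∏ l ∈ Icc i (i + n - 1), (((i' : ℂ) - (i : ℂ)) + (l : ℂ)) := by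
  have hi' : 0 < i' := lt_trans hi hii'
  have e1 : ∏ l ∈ Icc (i' + 1) (i' + n - 1), ((l : ℂ) - ((i' : ℂ) - (i : ℂ)))
      = ((i + 1).ascFactorial (n - 1) : ℂ) := by
    rw [show i' + n - 1 = i' + (n - 1) by omega, prodIccC, ← prodRangeAsc]
    push_cast
    exact prod_congr rfl fun j _ => by ring
  have e2 : ∏ l ∈ Icc i (i + n - 1), (((i' : ℂ) - (i : ℂ)) + (l : ℂ))
      = (i'.ascFactorial n : ℂ) := by
    rw [show Icc i (i + n - 1) = Icc ((i - 1) + 1) ((i - 1) + n) by congr 1 <;> omega,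
      prodIccC, ← prodRangeAsc, show i - 1 + 1 = i by omega]
    push_cast
    exact prod_congr rfl fun j _ => by ring
  rw [e1, e2]
  have hA : (i : ℂ) * ((i + 1).ascFactorial (n - 1) : ℂ) = (i.ascFactorial n : ℂ) := by
    rw [show n = (n - 1) + 1 by omega, asc_pull]
    push_cast
    ring_nf
  have hK : ((n + i' - 1).choose n : ℂ) * (i.ascFactorial n : ℂ)
      = ((n + i - 1).choose n : ℂ) * (i'.ascFactorial n : ℂ) := by
    exact_mod_cast congrArg (Nat.cast : ℕ → ℂ) (natkey n i i')
  rw [Nat.cast_sub (by omega : 1 ≤ i'), Nat.cast_sub (by omega : 1 ≤ i), Nat.cast_one]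
  have hic : (i : ℂ) ≠ 0 := Nat.cast_ne_zero.2 hi.ne'
  have hi'c : (i' : ℂ) ≠ 0 := Nat.cast_ne_zero.2 hi'.ne'
  field_simp
  linear_combination (((i' : ℂ) - 1) * ((n : ℂ) * ((i : ℂ) - 1) - (i : ℂ)) * ((n + i' - 1).choose n : ℂ)
      + (i' : ℂ) * ((n : ℂ) - (n : ℂ) * (i : ℂ) + (i : ℂ)) * ((n + i' - 1).choose n : ℂ)) * hA
    + (((i' : ℂ) - 1) * ((n : ℂ) * ((i : ℂ) - 1) - (i : ℂ))
      + (i' : ℂ) * ((n : ℂ) - (n : ℂ) * (i : ℂ) + (i : ℂ))) * hK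

theorem stmt10 (n i i' : ℕ) (hn : 0 < n) (hi : 0 < i) (hii' : i < i') :
    let α : MvPolynomial (Fin 2) ℂ := X 0
    let c : MvPolynomial (Fin 2) ℂ := X 1
    let a' : ℂ := ((n + i' - 1).choose n : ℂ) * ((n : ℂ) - 1)
    let b' : ℂ := ((n + i' - 1).choose n : ℂ) * (((i' : ℂ) - ((i' - 1 : ℕ) : ℂ) * (n : ℂ)) / (i' : ℂ))
    let b : ℂ := ((n + i - 1).choose n : ℂ) * (((i : ℂ) - ((i - 1 : ℕ) : ℂ) * (n : ℂ)) / (i : ℂ))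
    (-α + C (((i' : ℂ) - (i : ℂ))) * c) ∣
      ((C a' * α + C ((i' : ℂ) * b') * c) * ∏ l ∈ Finset.Icc (i' + 1) (i' + n - 1), (-α + C (l : ℂ) * c)
        - C b * ∏ l ∈ Finset.Icc i (i + n - 1), (α + C (l : ℂ) * c)) := by
  show (-(X 0) + C ((i' : ℂ) - (i : ℂ)) * X 1 : MvPolynomial (Fin 2) ℂ) ∣
      ((C (((n + i' - 1).choose n : ℂ) * ((n : ℂ) - 1)) * X 0
          + C ((i' : ℂ) * (((n + i' - 1).choose n : ℂ)
              * (((i' : ℂ) - ((i' - 1 : ℕ) : ℂ) * (n : ℂ)) / (i' : ℂ)))) * X 1)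
          * ∏ l ∈ Icc (i' + 1) (i' + n - 1), (-(X 0) + C (l : ℂ) * X 1)
        - C (((n + i - 1).choose n : ℂ) * (((i : ℂ) - ((i - 1 : ℕ) : ℂ) * (n : ℂ)) / (i : ℂ)))
          * ∏ l ∈ Icc i (i + n - 1), (X 0 + C (l : ℂ) * X 1))
  rw [show (-(X 0 : MvPolynomial (Fin 2) ℂ) + C ((i' : ℂ) - (i : ℂ)) * X 1)
      = -(X 0 - C ((i' : ℂ) - (i : ℂ)) * X 1) by ring, neg_dvd]
  have main : ∀ p : MvPolynomial (Fin 2) ℂ,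
      aeval ![(C ((i' : ℂ) - (i : ℂ)) * X 1 : MvPolynomial (Fin 2) ℂ), X 1] p = 0 →
      (X 0 - C ((i' : ℂ) - (i : ℂ)) * X 1 : MvPolynomial (Fin 2) ℂ) ∣ p := by
    intro p hp
    have h := factor_dvd ((i' : ℂ) - (i : ℂ)) p
    rwa [hp, sub_zero] at h
  apply main
  obtain ⟨m, rfl⟩ : ∃ m, n = m + 1 := ⟨n - 1, by omega⟩
  simp only [map_sub, map_mul, map_add, map_neg, map_prod, aeval_X, aeval_C,
    algebraMap_eq, Matrix.cons_val_zero, Matrix.cons_val_one, Matrix.head_cons]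
  simp only [← C_1, ← C_sub, ← C_mul, ← C_add]
  rw [prod_congr rfl (fun (l : ℕ) _ => show
      (-(C ((i' : ℂ) - (i : ℂ)) * X 1) + C (l : ℂ) * X 1 : MvPolynomial (Fin 2) ℂ)
        = C ((l : ℂ) - ((i' : ℂ) - (i : ℂ))) * X 1 by simp only [C_sub]; ring),
    prod_congr rfl (fun (l : ℕ) _ => show
      (C ((i' : ℂ) - (i : ℂ)) * X 1 + C (l : ℂ) * X 1 : MvPolynomial (Fin 2) ℂ)
        = C (((i' : ℂ) - (i : ℂ)) + (l : ℂ)) * X 1 by simp only [C_add]; ring),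
    prod_mul_distrib, prod_mul_distrib, prod_const, prod_const,
    ← map_prod (C : ℂ →+* MvPolynomial (Fin 2) ℂ),
    ← map_prod (C : ℂ →+* MvPolynomial (Fin 2) ℂ),
    Nat.card_Icc, Nat.card_Icc,
    show i' + (m + 1) - 1 + 1 - (i' + 1) = m by omega,
    show i + (m + 1) - 1 + 1 - i = m + 1 by omega]
  have hsC := congrArg (C : ℂ →+* MvPolynomial (Fin 2) ℂ) (scalar_key (m + 1) i i' hn hi hii')
  simp only [map_mul, map_add] at hsC
  simp only [C_mul, C_add]
  linear_combination (X 1 : MvPolynomial (Fin 2) ℂ) ^ (m + 1) * hsC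
end

section
/- Let Z_fin = { (z₁, z₂) ∈ ℂ[α] × ℂ[α] | α divides z₁ - z₂ }. If sequences (a_j)_{j≥0} and (b_j)_{j≥0} in Z_fin each satisfy the higher-order congruence relations, i.e., for every m ≥ 0, ∑_{j=0}^{m} (-1)^j C(m,j) a_j ∈ ((-α)^m, α^m)·Z_fin and similarly for (b_j), then the componentwise product sequence (a_j · b_j)_{j≥0} also satisfies these relations: for every m ≥ 0, ∑_{j=0}^{m} (-1)^j C(m,j) (a_j · b_j) ∈ ((-α)^m, α^m)·Z_fin. -/
open Polynomial Finset fwdDiff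

/-! Auxiliary lemmas about iterated forward differences. -/

private lemma aux13_fwdDiff_zero : Δ_[1] (0 : ℕ → ℤ) = 0 := by
  ext x; simp [fwdDiff]

private lemma aux13_iter_zero (n : ℕ) : (Δ_[1])^[n] (0 : ℕ → ℤ) = 0 := by
  induction n with
  | zero => rfl
  | succ n ih => rw [Function.iterate_succ_apply, aux13_fwdDiff_zero, ih]

private lemma aux13_mono {f : ℕ → ℤ} {d e : ℕ} (h : (Δ_[1])^[d] f = 0) (hde : d ≤ e) :
    (Δ_[1])^[e] f = 0 := by
  obtain ⟨c, rfl⟩ := Nat.exists_eq_add_of_le hde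
  rw [Nat.add_comm, Function.iterate_add_apply, h, aux13_iter_zero]

private lemma aux13_fwdDiff_mul (f g : ℕ → ℤ) :
    Δ_[1] (f * g) = Δ_[1] f * g + f * Δ_[1] g + Δ_[1] f * Δ_[1] g := by
  ext x
  simp only [fwdDiff, Pi.mul_apply, Pi.add_apply]
  ring

/-- Discrete Leibniz-style degree bound: product of "degree ≤ k" and "degree ≤ l"
functions has vanishing (k+l+1)-st difference. -/
private lemma aux13_deg_mul :
    ∀ (n k l : ℕ), k + l = n → ∀ (f g : ℕ → ℤ),
      (Δ_[1])^[k + 1] f = 0 → (Δ_[1])^[l + 1] g = 0 → (Δ_[1])^[n + 1] (f * g) = 0 := by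
  intro n
  induction n using Nat.strong_induction_on with
  | _ n IH =>
    intro k l hkl f g hf hg
    rw [Function.iterate_succ_apply, aux13_fwdDiff_mul]
    have h1 : (Δ_[1])^[n] (Δ_[1] f * g) = 0 := by
      rcases Nat.eq_zero_or_pos k with hk | hk
      · subst hk
        have : Δ_[1] f = 0 := by simpa using hf
        rw [this, zero_mul, aux13_iter_zero]
      · obtain ⟨k', rfl⟩ := Nat.exists_eq_add_of_lt hk
        have hk' : 0 + k' < n := by omega
        have hf' : (Δ_[1])^[k' + 1] (Δ_[1] f) = 0 := by
          rw [← Function.iterate_succ_apply]; simpa [Nat.add_comm] using hf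
        have := IH ((0 + k') + l) (by omega) k' l (by omega) (Δ_[1] f) g hf' hg
        have hn : k' + l + 1 ≤ n := by omega
        exact aux13_mono (by simpa using this) hn
    have h2 : (Δ_[1])^[n] (f * Δ_[1] g) = 0 := by
      rcases Nat.eq_zero_or_pos l with hl | hl
      · subst hl
        have : Δ_[1] g = 0 := by simpa using hg
        rw [this, mul_zero, aux13_iter_zero]
      · obtain ⟨l', rfl⟩ := Nat.exists_eq_add_of_lt hl
        have hg' : (Δ_[1])^[l' + 1] (Δ_[1] g) = 0 := by
          rw [← Function.iterate_succ_apply]; simpa [Nat.add_comm] using hg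
        have := IH (k + l') (by omega) k l' rfl f (Δ_[1] g) hf hg'
        exact aux13_mono this (by omega)
    have h3 : (Δ_[1])^[n] (Δ_[1] f * Δ_[1] g) = 0 := by
      rcases Nat.eq_zero_or_pos k with hk | hk
      · subst hk
        have : Δ_[1] f = 0 := by simpa using hf
        rw [this, zero_mul, aux13_iter_zero]
      · obtain ⟨k', rfl⟩ := Nat.exists_eq_add_of_lt hk
        have hf' : (Δ_[1])^[k' + 1] (Δ_[1] f) = 0 := by
          rw [← Function.iterate_succ_apply]; simpa [Nat.add_comm] using hf
        have hg' : (Δ_[1])^[l + 1] (Δ_[1] g) = 0 := by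
          rw [← Function.iterate_succ_apply, Function.iterate_succ_apply', hg,
            aux13_fwdDiff_zero]
        have := IH (k' + l) (by omega) k' l rfl (Δ_[1] f) (Δ_[1] g) hf' hg'
        exact aux13_mono this (by omega)
    rw [fwdDiff_iter_add, fwdDiff_iter_add, h1, h2, h3]
    simp

private lemma aux13_choose_deg (k : ℕ) :
    (Δ_[1])^[k + 1] (fun x : ℕ => (x.choose k : ℤ)) = 0 := by
  have h := fwdDiff_iter_choose (0 : ℕ) k
  rw [Function.iterate_succ_apply']
  rw [Nat.add_zero] at h
  rw [h]
  simp only [Nat.choose_zero_right, Nat.cast_one]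
  exact fwdDiff_const 1 1

/-- Vanishing of the key coefficients. -/
private lemma aux13_coeff_vanish {M k l : ℕ} (h : k + l < M) :
    (Δ_[1])^[M] (fun j : ℕ => ((j.choose k : ℤ) * (j.choose l : ℤ))) 0 = 0 := by
  have : (Δ_[1])^[M] (fun j : ℕ => ((j.choose k : ℤ) * (j.choose l : ℤ))) = 0 := by
    have := aux13_deg_mul (k + l) k l rfl _ _ (aux13_choose_deg k) (aux13_choose_deg l)
    exact aux13_mono this (by omega)
  rw [this]; rfl

/-- `Δ^[m] f 0` as signed binomial sum. -/
private lemma aux13_key {G : Type*} [AddCommGroup G] (f : ℕ → G) (m : ℕ) :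
    (Δ_[1])^[m] f 0 = ∑ j ∈ range (m + 1), ((-1 : ℤ) ^ (m - j) * m.choose j) • f j := by
  simpa using fwdDiff_iter_eq_sum_shift 1 f m 0

private lemma aux13_newton {G : Type*} [AddCommGroup G] (f : ℕ → G) (j : ℕ) :
    f j = ∑ k ∈ range (j + 1), j.choose k • (Δ_[1])^[k] f 0 := by
  simpa using shift_eq_sum_fwdDiff_iter 1 f j 0

/-- Main abstract expansion: `Δ^[M](a·b) 0` in terms of `Δ^[k]a 0 * Δ^[l]b 0`. -/
private lemma aux13_expand {R : Type*} [CommRing R] (a b : ℕ → R) (M : ℕ) :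
    (Δ_[1])^[M] (fun j => a j * b j) 0
      = ∑ k ∈ range (M + 1), ∑ l ∈ range (M + 1),
          ((Δ_[1])^[M] (fun j : ℕ => ((j.choose k : ℤ) * (j.choose l : ℤ))) 0)
            • ((Δ_[1])^[k] a 0 * (Δ_[1])^[l] b 0) := by
  have hA : ∀ j ∈ range (M + 1),
      a j = ∑ k ∈ range (M + 1), (j.choose k : ℤ) • (Δ_[1])^[k] a 0 := by
    intro j hj
    rw [aux13_newton a j]
    rw [Finset.sum_subset ((Finset.range_subset_range (n := j + 1) (m := M + 1)).2 (by simpa using Finset.mem_range.1 hj))]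
    · exact Finset.sum_congr rfl fun k _ => by rw [natCast_zsmul]
    · intro k _ hk
      rw [Nat.choose_eq_zero_of_lt (by simpa using hk), zero_smul]
  have hB : ∀ j ∈ range (M + 1),
      b j = ∑ l ∈ range (M + 1), (j.choose l : ℤ) • (Δ_[1])^[l] b 0 := by
    intro j hj
    rw [aux13_newton b j]
    rw [Finset.sum_subset ((Finset.range_subset_range (n := j + 1) (m := M + 1)).2 (by simpa using Finset.mem_range.1 hj))]
    · exact Finset.sum_congr rfl fun k _ => by rw [natCast_zsmul]
    · intro k _ hk
      rw [Nat.choose_eq_zero_of_lt (by simpa using hk), zero_smul]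
  rw [aux13_key]
  have step : ∀ j ∈ range (M + 1),
      ((-1 : ℤ) ^ (M - j) * M.choose j) • (a j * b j)
        = ∑ k ∈ range (M + 1), ∑ l ∈ range (M + 1),
            (((-1 : ℤ) ^ (M - j) * M.choose j) * ((j.choose k : ℤ) * (j.choose l : ℤ)))
              • ((Δ_[1])^[k] a 0 * (Δ_[1])^[l] b 0) := by
    intro j hj
    rw [hA j hj, hB j hj, Finset.sum_mul_sum, Finset.smul_sum]
    refine Finset.sum_congr rfl fun k _ => ?_
    rw [Finset.smul_sum]
    refine Finset.sum_congr rfl fun l _ => ?_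
    rw [smul_mul_assoc, mul_smul_comm, smul_smul, smul_smul, mul_assoc]
  rw [Finset.sum_congr rfl step, Finset.sum_comm]
  refine Finset.sum_congr rfl fun k _ => ?_
  rw [Finset.sum_comm]
  refine Finset.sum_congr rfl fun l _ => ?_
  rw [aux13_key (fun j : ℕ => ((j.choose k : ℤ) * (j.choose l : ℤ))) M, Finset.sum_smul]
  refine Finset.sum_congr rfl fun j _ => ?_
  simp only [smul_eq_mul, smul_smul]

/-! Concrete part: the ring `ℂ[X] × ℂ[X]` and the set `Zfin`. -/

private lemma aux13_pow_pair (p q : Polynomial ℂ) (m : ℕ) :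
    ((p, q) : Polynomial ℂ × Polynomial ℂ) ^ m = (p ^ m, q ^ m) := by
  ext <;> simp

private lemma aux13_sign (u : Polynomial ℂ) (m : ℕ) (z : Polynomial ℂ × Polynomial ℂ) :
    (-1 : ℤ) ^ m • (((u ^ m, (-u) ^ m) : Polynomial ℂ × Polynomial ℂ) * z)
      = ((-u) ^ m, u ^ m) * z := by
  have key : ∀ (p : Polynomial ℂ) (q : Polynomial ℂ), (-1 : ℤ) ^ m • (p ^ m * q) = (-p) ^ m * q := by
    intro p q
    rw [zsmul_eq_mul]
    push_cast
    rw [← mul_assoc, ← mul_pow, neg_one_mul]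
  rw [Prod.ext_iff]
  refine ⟨?_, ?_⟩
  · simpa using key u z.1
  · simpa [neg_neg] using key (-u) z.2

/-- Conversion between `Δ^[m] f 0` and the alternating sum in the statement. -/
private lemma aux13_conv (f : ℕ → Polynomial ℂ × Polynomial ℂ) (m : ℕ) :
    (Δ_[1])^[m] f 0
      = (-1 : ℤ) ^ m • ∑ j ∈ Finset.range (m + 1),
          ((-1 : ℂ) ^ j * (m.choose j : ℂ)) • f j := by
  rw [aux13_key, Finset.smul_sum]
  refine Finset.sum_congr rfl fun j hj => ?_
  have hjm : j ≤ m := Nat.lt_succ_iff.1 (Finset.mem_range.1 hj)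
  have hc : ((-1 : ℂ) ^ j * (m.choose j : ℂ)) • f j
      = ((-1 : ℤ) ^ j * (m.choose j : ℤ)) • f j := by
    rw [← Int.cast_smul_eq_zsmul ℂ]
    norm_num
  rw [hc, smul_smul]
  congr 1
  have h2 : (-1 : ℤ) ^ (m - j) * (-1) ^ j = (-1) ^ m := by
    rw [← pow_add, Nat.sub_add_cancel hjm]
  have h3 : (-1 : ℤ) ^ j * (-1 : ℤ) ^ j = 1 := by
    rw [← mul_pow]; norm_num
  calc (-1 : ℤ) ^ (m - j) * (m.choose j : ℤ)
      = (-1) ^ (m - j) * (-1) ^ j * ((-1) ^ j * (m.choose j : ℤ)) := by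
        rw [mul_assoc, ← mul_assoc ((-1 : ℤ) ^ j), h3, one_mul]
    _ = (-1) ^ m * ((-1) ^ j * (m.choose j : ℤ)) := by rw [h2]

/-! Closure properties of `Zfin = {z | X ∣ z.1 - z.2}`. -/

private lemma aux13_mem_mul {u v : Polynomial ℂ × Polynomial ℂ}
    (hu : X ∣ u.1 - u.2) (hv : X ∣ v.1 - v.2) : X ∣ (u * v).1 - (u * v).2 := by
  have : (u * v).1 - (u * v).2 = u.1 * (v.1 - v.2) + v.2 * (u.1 - u.2) := by
    simp only [Prod.fst_mul, Prod.snd_mul]; ring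
  rw [this]
  exact dvd_add (Dvd.dvd.mul_left hv u.1) (Dvd.dvd.mul_left hu v.2)

private lemma aux13_mem_smul (n : ℤ) {u : Polynomial ℂ × Polynomial ℂ}
    (hu : X ∣ u.1 - u.2) : X ∣ (n • u).1 - (n • u).2 := by
  have : (n • u).1 - (n • u).2 = (n : Polynomial ℂ) * (u.1 - u.2) := by
    rw [Prod.smul_fst, Prod.smul_snd, zsmul_eq_mul, zsmul_eq_mul]; ring
  rw [this]
  exact Dvd.dvd.mul_left hu _

private lemma aux13_mem_pow {u : Polynomial ℂ × Polynomial ℂ}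
    (hu : X ∣ u.1 - u.2) (d : ℕ) : X ∣ (u ^ d).1 - (u ^ d).2 := by
  induction d with
  | zero => simp
  | succ d ih =>
      have : u ^ (d + 1) = u ^ d * u := pow_succ u d
      rw [this]
      exact aux13_mem_mul ih hu

theorem stmt13
    (Zfin : Set (Polynomial ℂ × Polynomial ℂ))
    (hZ : Zfin = {z | X ∣ z.1 - z.2})
    (a b : ℕ → Polynomial ℂ × Polynomial ℂ)
    (ha : ∀ j, a j ∈ Zfin) (hb : ∀ j, b j ∈ Zfin)
    (hca : ∀ m : ℕ, ∃ z ∈ Zfin,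
      ∑ j ∈ Finset.range (m + 1), ((-1 : ℂ) ^ j * (m.choose j : ℂ)) • a j
        = ((-X) ^ m, X ^ m) * z)
    (hcb : ∀ m : ℕ, ∃ z ∈ Zfin,
      ∑ j ∈ Finset.range (m + 1), ((-1 : ℂ) ^ j * (m.choose j : ℂ)) • b j
        = ((-X) ^ m, X ^ m) * z) :
    ∀ m : ℕ, ∃ z ∈ Zfin,
      ∑ j ∈ Finset.range (m + 1), ((-1 : ℂ) ^ j * (m.choose j : ℂ)) • (a j * b j)
        = ((-X) ^ m, X ^ m) * z := by
  subst hZ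
  intro M
  choose za hza hEa using hca
  choose zb hzb hEb using hcb
  set w : Polynomial ℂ × Polynomial ℂ := ((X : Polynomial ℂ), (-X : Polynomial ℂ)) with hw
  have hwpow : ∀ m : ℕ, w ^ m = ((X : Polynomial ℂ) ^ m, (-X : Polynomial ℂ) ^ m) := fun m =>
    aux13_pow_pair _ _ m
  -- difference form of the hypotheses
  have hDa : ∀ m, (Δ_[1])^[m] a 0 = w ^ m * za m := by
    intro m
    rw [aux13_conv a m, hEa m, hwpow m]
    simpa [neg_neg] using aux13_sign (-X : Polynomial ℂ) m (za m)
  have hDb : ∀ m, (Δ_[1])^[m] b 0 = w ^ m * zb m := by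
    intro m
    rw [aux13_conv b m, hEb m, hwpow m]
    simpa [neg_neg] using aux13_sign (-X : Polynomial ℂ) m (zb m)
  -- the witness
  set Z : Polynomial ℂ × Polynomial ℂ :=
    ∑ k ∈ Finset.range (M + 1), ∑ l ∈ Finset.range (M + 1),
      ((Δ_[1])^[M] (fun j : ℕ => ((j.choose k : ℤ) * (j.choose l : ℤ))) 0)
        • (w ^ (k + l - M) * (za k * zb l)) with hZdef
  have hZmem : X ∣ Z.1 - Z.2 := by
    rw [hZdef, Prod.fst_sum, Prod.snd_sum, ← Finset.sum_sub_distrib]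
    refine Finset.dvd_sum fun k _ => ?_
    rw [Prod.fst_sum, Prod.snd_sum, ← Finset.sum_sub_distrib]
    refine Finset.dvd_sum fun l _ => ?_
    exact aux13_mem_smul _ (aux13_mem_mul (aux13_mem_pow (by simp [hw]) _)
      (aux13_mem_mul (hza k) (hzb l)))
  have hDab : (Δ_[1])^[M] (fun j => a j * b j) 0 = w ^ M * Z := by
    rw [aux13_expand a b M, hZdef, Finset.mul_sum]
    refine Finset.sum_congr rfl fun k _ => ?_
    rw [Finset.mul_sum]
    refine Finset.sum_congr rfl fun l _ => ?_
    rcases le_or_gt M (k + l) with h | h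
    · rw [hDa k, hDb l, mul_smul_comm]
      congr 1
      have hpow : w ^ M * w ^ (k + l - M) = w ^ k * w ^ l := by
        rw [← pow_add, Nat.add_sub_cancel' h, pow_add]
      calc w ^ k * za k * (w ^ l * zb l) = w ^ k * w ^ l * (za k * zb l) := by ring
        _ = w ^ M * w ^ (k + l - M) * (za k * zb l) := by rw [hpow]
        _ = w ^ M * (w ^ (k + l - M) * (za k * zb l)) := by ring
    · rw [aux13_coeff_vanish h]
      simp
  refine ⟨Z, hZmem, ?_⟩
  have hconv := aux13_conv (fun j => a j * b j) M
  rw [hDab] at hconv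
  have h3 : ((-1 : ℤ) ^ M * (-1 : ℤ) ^ M) = 1 := by rw [← mul_pow]; norm_num
  have hfin : ∑ j ∈ Finset.range (M + 1), ((-1 : ℂ) ^ j * (M.choose j : ℂ)) • (a j * b j)
      = (-1 : ℤ) ^ M • (w ^ M * Z) := by
    rw [hconv, smul_smul, h3, one_smul]
  rw [hfin, hwpow M]
  exact aux13_sign (X : Polynomial ℂ) M Z
end

section
/- Let Z_fin = { (z₁, z₂) ∈ ℂ[α] × ℂ[α] | α divides z₁ - z₂ }, and fix n ≥ 0. Define a_j = 0 for j < n and a_j = C(j, n) · ((-α)^n, α^n) for j ≥ n. Then for every m ≥ 0, ∑_{j=0}^{m} (-1)^j C(m,j) a_j belongs to ((-α)^m, α^m)·Z_fin. -/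
open Polynomial

lemma key_sum (n m : ℕ) :
    ∑ j ∈ Finset.range (m + 1), ((-1 : ℂ) ^ j * (m.choose j : ℂ)) *
      (if j < n then 0 else (j.choose n : ℂ))
    = if m = n then (-1 : ℂ) ^ m else 0 := by
  rcases lt_or_ge m n with h | h
  · rw [if_neg h.ne]
    apply Finset.sum_eq_zero
    intro j hj
    rw [Finset.mem_range] at hj
    rw [if_pos (lt_of_le_of_lt (Nat.lt_succ_iff.mp hj) h), mul_zero]
  · -- n ≤ m
    have hsplit : Finset.range (m + 1) = Finset.range n ∪ Finset.Ico n (m + 1) := by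
      rw [Finset.range_eq_Ico, Finset.range_eq_Ico, Finset.Ico_union_Ico_eq_Ico (Nat.zero_le _) (by omega)]
    rw [hsplit, Finset.sum_union (by
      simp [Finset.disjoint_left, Finset.mem_range, Finset.mem_Ico]
      omega)]
    have h1 : ∑ j ∈ Finset.range n, ((-1 : ℂ) ^ j * (m.choose j : ℂ)) *
        (if j < n then 0 else (j.choose n : ℂ)) = 0 := by
      apply Finset.sum_eq_zero
      intro j hj
      rw [Finset.mem_range] at hj
      rw [if_pos hj, mul_zero]
    rw [h1, zero_add]
    have h2 : ∑ j ∈ Finset.Ico n (m + 1), ((-1 : ℂ) ^ j * (m.choose j : ℂ)) *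
        (if j < n then 0 else (j.choose n : ℂ))
        = ∑ k ∈ Finset.range (m - n + 1),
            ((-1 : ℂ) ^ (n + k) * ((m.choose n : ℂ) * ((m - n).choose k : ℂ))) := by
      rw [Finset.sum_Ico_eq_sum_range]
      have : m + 1 - n = m - n + 1 := by omega
      rw [this]
      apply Finset.sum_congr rfl
      intro k hk
      rw [Finset.mem_range] at hk
      rw [if_neg (by omega)]
      have hc : (m.choose (n + k) : ℂ) * ((n + k).choose n : ℂ)
          = (m.choose n : ℂ) * ((m - n).choose k : ℂ) := by
        have := Nat.choose_mul (n := m) (k := n + k) (s := n) (by omega)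
        rw [Nat.add_sub_cancel_left] at this
        exact_mod_cast congrArg (Nat.cast : ℕ → ℂ) this
      rw [mul_assoc, hc]
    rw [h2]
    have h3 : ∑ k ∈ Finset.range (m - n + 1),
        ((-1 : ℂ) ^ (n + k) * ((m.choose n : ℂ) * ((m - n).choose k : ℂ)))
        = (-1 : ℂ) ^ n * (m.choose n : ℂ) *
          ∑ k ∈ Finset.range (m - n + 1), ((-1 : ℂ) ^ k * ((m - n).choose k : ℂ)) := by
      rw [Finset.mul_sum]
      apply Finset.sum_congr rfl
      intro k _
      ring_nf
    rw [h3]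
    have h4 : ∑ k ∈ Finset.range (m - n + 1), ((-1 : ℂ) ^ k * ((m - n).choose k : ℂ))
        = if m - n = 0 then 1 else 0 := by
      have := Int.alternating_sum_range_choose (n := m - n)
      exact_mod_cast congrArg (Int.cast : ℤ → ℂ) this
    rw [h4]
    rcases eq_or_ne m n with rfl | hne
    · simp
    · rw [if_neg (by omega), if_neg hne, mul_zero]

theorem stmt14 (n : ℕ)
    (a : ℕ → Polynomial ℂ × Polynomial ℂ)
    (ha : ∀ j, a j = if j < n then 0 else (j.choose n : ℂ) • ((-X) ^ n, X ^ n)) :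
    ∀ m : ℕ, ∃ z : Polynomial ℂ × Polynomial ℂ, X ∣ z.1 - z.2 ∧
      ∑ j ∈ Finset.range (m + 1), ((-1 : ℂ) ^ j * (m.choose j : ℂ)) • a j
        = ((-X) ^ m, X ^ m) * z := by
  intro m
  rcases eq_or_ne m n with rfl | hne
  · refine ⟨(((-1 : ℂ) ^ m : ℂ) • 1, ((-1 : ℂ) ^ m : ℂ) • 1), by simp, ?_⟩
    have hsum : ∑ j ∈ Finset.range (m + 1), ((-1 : ℂ) ^ j * (m.choose j : ℂ)) • a j
        = ((-1 : ℂ) ^ m) • ((-X : Polynomial ℂ) ^ m, (X : Polynomial ℂ) ^ m) := by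
      calc ∑ j ∈ Finset.range (m + 1), ((-1 : ℂ) ^ j * (m.choose j : ℂ)) • a j
          = ∑ j ∈ Finset.range (m + 1),
            (((-1 : ℂ) ^ j * (m.choose j : ℂ)) * (if j < m then 0 else (j.choose m : ℂ))) •
              ((-X : Polynomial ℂ) ^ m, (X : Polynomial ℂ) ^ m) := by
            apply Finset.sum_congr rfl
            intro j _
            rw [ha j]
            split_ifs with hj
            · simp
            · rw [smul_smul]
        _ = _ := by
            rw [← Finset.sum_smul, key_sum m m, if_pos rfl]
    rw [hsum]
    ext <;> simp [Prod.smul_def, smul_smul]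
  · refine ⟨0, by simp, ?_⟩
    have hsum : ∑ j ∈ Finset.range (m + 1), ((-1 : ℂ) ^ j * (m.choose j : ℂ)) • a j
        = (0 : ℂ) • ((-X : Polynomial ℂ) ^ n, (X : Polynomial ℂ) ^ n) := by
      calc ∑ j ∈ Finset.range (m + 1), ((-1 : ℂ) ^ j * (m.choose j : ℂ)) • a j
          = ∑ j ∈ Finset.range (m + 1),
            (((-1 : ℂ) ^ j * (m.choose j : ℂ)) * (if j < n then 0 else (j.choose n : ℂ))) •
              ((-X : Polynomial ℂ) ^ n, (X : Polynomial ℂ) ^ n) := by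
            apply Finset.sum_congr rfl
            intro j _
            rw [ha j]
            split_ifs with hj
            · simp
            · rw [smul_smul]
        _ = _ := by
            rw [← Finset.sum_smul, key_sum n m, if_neg hne]
    rw [hsum]
    simp
end

section
/- Let Z_fin = { (z₁, z₂) ∈ ℂ[α] × ℂ[α] | α divides z₁ - z₂ }, and fix n ≥ 1. Define a_j = 0 for j ≤ n-2, a_{n-1} = (0, α^n), and for j ≥ n, a_j = (-a_{j-n+1,n}·(-α)^n, b_{j-n+1,n}·α^n) where a_{i,n} = C(n+i-1,n)(n-1) and b_{i,n} = C(n+i-1,n)(i-(i-1)n)/i. Then for every m ≥ 0, ∑_{j=0}^{m} (-1)^j C(m,j) a_j belongs to ((-α)^m, α^m)·Z_fin. -/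
open Polynomial

lemma key15 (m k : ℕ) :
    ∑ j ∈ Finset.range (m + 1), (-1 : ℂ) ^ j * (m.choose j : ℂ) * (j.choose k : ℂ)
      = if m = k then (-1 : ℂ) ^ k else 0 := by
  rcases lt_or_ge m k with h | h
  · rw [if_neg (by omega)]
    apply Finset.sum_eq_zero
    intro j hj
    simp only [Finset.mem_range] at hj
    rw [Nat.choose_eq_zero_of_lt (show j < k by omega)]
    simp
  · have h1 : ∑ j ∈ Finset.range (m + 1), (-1 : ℂ) ^ j * (m.choose j : ℂ) * (j.choose k : ℂ)
        = ∑ j ∈ Finset.Ico k (m + 1), (-1 : ℂ) ^ j * (m.choose j : ℂ) * (j.choose k : ℂ) := by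
      rw [Finset.range_eq_Ico]
      rw [Finset.sum_Ico_eq_sum_range, Finset.sum_Ico_eq_sum_range]
      simp only [Nat.sub_zero, Nat.add_zero, Nat.zero_add]
      have hsplit : m + 1 = k + (m + 1 - k) := by omega
      rw [hsplit, Finset.sum_range_add]
      have : ∀ i ∈ Finset.range k, (-1 : ℂ) ^ i * (m.choose i : ℂ) * (i.choose k : ℂ) = 0 := by
        intro i hi
        simp only [Finset.mem_range] at hi
        rw [Nat.choose_eq_zero_of_lt (show i < k by omega)]
        simp
      rw [Finset.sum_congr rfl this]
      simp
    rw [h1, Finset.sum_Ico_eq_sum_range]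
    have h2 : m + 1 - k = (m - k) + 1 := by omega
    rw [h2]
    have h3 : ∀ t ∈ Finset.range ((m - k) + 1),
        (-1 : ℂ) ^ (k + t) * (m.choose (k + t) : ℂ) * ((k + t).choose k : ℂ)
          = ((-1 : ℂ) ^ k * (m.choose k : ℂ)) * ((-1 : ℂ) ^ t * ((m - k).choose t : ℂ)) := by
      intro t ht
      simp only [Finset.mem_range] at ht
      have hc : m.choose (k + t) * (k + t).choose k = m.choose k * (m - k).choose (k + t - k) :=
        Nat.choose_mul (by omega)
      rw [Nat.add_sub_cancel_left] at hc
      have hc' : (m.choose (k + t) : ℂ) * ((k + t).choose k : ℂ)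
          = (m.choose k : ℂ) * ((m - k).choose t : ℂ) := by exact_mod_cast congrArg (Nat.cast (R := ℂ)) hc
      rw [pow_add]
      calc (-1 : ℂ) ^ k * (-1 : ℂ) ^ t * (m.choose (k + t) : ℂ) * ((k + t).choose k : ℂ)
          = (-1 : ℂ) ^ k * (-1 : ℂ) ^ t * ((m.choose (k + t) : ℂ) * ((k + t).choose k : ℂ)) := by ring
        _ = (-1 : ℂ) ^ k * (-1 : ℂ) ^ t * ((m.choose k : ℂ) * ((m - k).choose t : ℂ)) := by rw [hc']
        _ = ((-1 : ℂ) ^ k * (m.choose k : ℂ)) * ((-1 : ℂ) ^ t * ((m - k).choose t : ℂ)) := by ring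
    rw [Finset.sum_congr rfl h3, ← Finset.mul_sum]
    have h4 : ∑ t ∈ Finset.range ((m - k) + 1), (-1 : ℂ) ^ t * ((m - k).choose t : ℂ)
        = if m - k = 0 then 1 else 0 := by
      have := Int.alternating_sum_range_choose (n := m - k)
      have h5 : ((∑ t ∈ Finset.range ((m - k) + 1), ((-1) ^ t * ((m - k).choose t) : ℤ) : ℤ) : ℂ)
          = ((if m - k = 0 then (1:ℤ) else 0 : ℤ) : ℂ) := by exact_mod_cast congrArg (Int.cast (R := ℂ)) this
      push_cast at h5
      convert h5 using 2 <;> simp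
    rw [h4]
    by_cases hmk : m = k
    · subst hmk; simp
    · rw [if_neg (by omega), if_neg hmk, mul_zero]

theorem stmt15 (n : ℕ) (hn : 0 < n)
    (A B : ℕ → ℂ)
    (hA : ∀ i, A i = ((n + i - 1).choose n : ℂ) * ((n : ℂ) - 1))
    (hB : ∀ i, B i = ((n + i - 1).choose n : ℂ) * (((i : ℂ) - ((i - 1 : ℕ) : ℂ) * (n : ℂ)) / (i : ℂ)))
    (a : ℕ → Polynomial ℂ × Polynomial ℂ)
    (ha : ∀ j, a j =
      if j + 2 ≤ n then 0
      else if j + 1 = n then (0, X ^ n)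
      else (C (-(A (j - n + 1))) * (-X) ^ n, C (B (j - n + 1)) * X ^ n)) :
    ∀ m : ℕ, ∃ z : Polynomial ℂ × Polynomial ℂ, X ∣ z.1 - z.2 ∧
      ∑ j ∈ Finset.range (m + 1), ((-1 : ℂ) ^ j * (m.choose j : ℂ)) • a j
        = ((-X) ^ m, X ^ m) * z := by
  have hfst : ∀ j, (a j).1 = C (-(((n : ℂ) - 1) * (j.choose n : ℂ))) * (-X) ^ n := by
    intro j
    rw [ha j]
    by_cases h1 : j + 2 ≤ n
    · rw [if_pos h1]
      rw [Nat.choose_eq_zero_of_lt (show j < n by omega)]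
      simp
    · rw [if_neg h1]
      by_cases h2 : j + 1 = n
      · rw [if_pos h2]
        rw [Nat.choose_eq_zero_of_lt (show j < n by omega)]
        simp
      · rw [if_neg h2]
        show C (-(A (j - n + 1))) * (-X) ^ n = _
        rw [hA]
        have h3 : n + (j - n + 1) - 1 = j := by omega
        rw [h3, mul_comm ((j.choose n : ℂ)) ((n : ℂ) - 1)]
  have hsnd : ∀ j, (a j).2
      = C (((1 : ℂ) - (n : ℂ)) * (j.choose n : ℂ) + (j.choose (n - 1) : ℂ)) * X ^ n := by
    intro j
    rw [ha j]
    by_cases h1 : j + 2 ≤ n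
    · rw [if_pos h1]
      rw [Nat.choose_eq_zero_of_lt (show j < n by omega),
        Nat.choose_eq_zero_of_lt (show j < n - 1 by omega)]
      simp
    · rw [if_neg h1]
      by_cases h2 : j + 1 = n
      · rw [if_pos h2]
        rw [Nat.choose_eq_zero_of_lt (show j < n by omega),
          (show j.choose (n - 1) = 1 by rw [show n - 1 = j by omega, Nat.choose_self])]
        simp
      · rw [if_neg h2]
        show C (B (j - n + 1)) * X ^ n = _
        have hjn : n ≤ j := by omega
        have hBval : B (j - n + 1)
            = ((1 : ℂ) - (n : ℂ)) * (j.choose n : ℂ) + (j.choose (n - 1) : ℂ) := by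
          rw [hB]
          have h3 : n + (j - n + 1) - 1 = j := by omega
          have h4 : j - n + 1 - 1 = j - n := by omega
          rw [h3, h4]
          have hi0 : ((j - n + 1 : ℕ) : ℂ) ≠ 0 :=
            Nat.cast_ne_zero.mpr (Nat.succ_ne_zero _)
          have hkey : (j.choose n : ℂ) * (n : ℂ)
              = (j.choose (n - 1) : ℂ) * ((j - n + 1 : ℕ) : ℂ) := by
            have := Nat.choose_succ_right_eq j (n - 1)
            rw [show n - 1 + 1 = n by omega, show j - (n - 1) = j - n + 1 by omega] at this
            exact_mod_cast congrArg (Nat.cast (R := ℂ)) this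
          have hc : ((j - n : ℕ) : ℂ) = ((j - n + 1 : ℕ) : ℂ) - 1 := by push_cast; ring
          rw [hc, mul_div_assoc', div_eq_iff hi0]
          linear_combination hkey
        rw [hBval]
  intro m
  have key : ∀ k : ℕ, ∑ j ∈ Finset.range (m + 1),
      (-1 : ℂ) ^ j * (m.choose j : ℂ) * (j.choose k : ℂ)
        = if m = k then (-1 : ℂ) ^ k else 0 := fun k => key15 m k
  set S := ∑ j ∈ Finset.range (m + 1), ((-1 : ℂ) ^ j * (m.choose j : ℂ)) • a j with hS
  have hS1 : S.1 = C (-(((n : ℂ) - 1) * (if m = n then (-1 : ℂ) ^ n else 0))) * (-X) ^ n := by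
    rw [hS, Prod.fst_sum]
    have h : ∀ j ∈ Finset.range (m + 1), (((-1 : ℂ) ^ j * (m.choose j : ℂ)) • a j).1
        = C ((-1 : ℂ) ^ j * (m.choose j : ℂ) * (-(((n : ℂ) - 1) * (j.choose n : ℂ)))) * (-X) ^ n := by
      intro j _
      rw [Prod.smul_fst, hfst j, Polynomial.smul_eq_C_mul, ← mul_assoc, ← map_mul]
    rw [Finset.sum_congr rfl h, ← Finset.sum_mul, ← map_sum]
    congr 2
    rw [← key n, Finset.mul_sum, ← Finset.sum_neg_distrib]
    exact Finset.sum_congr rfl (fun j _ => by ring)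
  have hS2 : S.2 = C (((1 : ℂ) - (n : ℂ)) * (if m = n then (-1 : ℂ) ^ n else 0)
      + (if m = n - 1 then (-1 : ℂ) ^ (n - 1) else 0)) * X ^ n := by
    rw [hS, Prod.snd_sum]
    have h : ∀ j ∈ Finset.range (m + 1), (((-1 : ℂ) ^ j * (m.choose j : ℂ)) • a j).2
        = C ((-1 : ℂ) ^ j * (m.choose j : ℂ)
            * (((1 : ℂ) - (n : ℂ)) * (j.choose n : ℂ) + (j.choose (n - 1) : ℂ))) * X ^ n := by
      intro j _
      rw [Prod.smul_snd, hsnd j, Polynomial.smul_eq_C_mul, ← mul_assoc, ← map_mul]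
    rw [Finset.sum_congr rfl h, ← Finset.sum_mul, ← map_sum]
    congr 2
    rw [← key n, ← key (n - 1), Finset.mul_sum, ← Finset.sum_add_distrib]
    exact Finset.sum_congr rfl (fun j _ => by ring)
  rcases le_or_gt m n with hmn | hmn
  · refine ⟨(C (-(((n : ℂ) - 1) * (if m = n then (-1 : ℂ) ^ n else 0))) * (-X) ^ (n - m),
      C (((1 : ℂ) - (n : ℂ)) * (if m = n then (-1 : ℂ) ^ n else 0)
        + (if m = n - 1 then (-1 : ℂ) ^ (n - 1) else 0)) * X ^ (n - m)), ?_, ?_⟩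
    · by_cases hm : m = n
      · rw [if_pos hm, if_neg (by omega), show n - m = 0 by omega, pow_zero, pow_zero,
          mul_one, mul_one, ← map_sub]
        have h0 : (-(((n : ℂ) - 1) * (-1 : ℂ) ^ n))
            - (((1 : ℂ) - (n : ℂ)) * (-1 : ℂ) ^ n + 0) = 0 := by ring
        rw [h0, map_zero]
        exact dvd_zero _
      · apply dvd_sub
        · exact Dvd.dvd.mul_left (dvd_pow (dvd_neg.mpr dvd_rfl) (by omega)) _
        · exact Dvd.dvd.mul_left (dvd_pow dvd_rfl (by omega)) _
    · rw [Prod.mk_mul_mk]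
      apply Prod.ext
      · rw [hS1]
        show _ = (-X) ^ m * _
        rw [show ((-X : Polynomial ℂ)) ^ n = (-X) ^ m * (-X) ^ (n - m) by
          rw [← pow_add]; congr 1; omega]
        ring
      · rw [hS2]
        show _ = (X : Polynomial ℂ) ^ m * _
        rw [show ((X : Polynomial ℂ)) ^ n = X ^ m * X ^ (n - m) by
          rw [← pow_add]; congr 1; omega]
        ring
  · refine ⟨0, by simp, ?_⟩
    rw [mul_zero]
    apply Prod.ext
    · rw [hS1, if_neg (by omega)]
      simp
    · rw [hS2, if_neg (by omega), if_neg (by omega)]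
      simp
end

section
/- Suppose f, g ∈ ℂ[α, c] satisfy ∏_{l=1}^{n}(-α + lc) ∣ f, ∏_{l=1}^{n}(α + lc) ∣ g, and α ∣ g - f, for some n ≥ 0. Then the product ∏_{l=1}^{n}(α + lc) · ∏_{l=1}^{n}(-α + lc) divides g · ∏_{l=1}^{n}(-α + lc) − f · ∏_{l=1}^{n}(α + lc), and moreover α divides g · ∏_{l=1}^{n}(-α + lc) − f · ∏_{l=1}^{n}(α + lc). -/
open MvPolynomial

lemma aux_prod_sub_prod {R ι : Type*} [CommRing R] (a : R) (s : Finset ι)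
    (f g : ι → R) (h : ∀ i ∈ s, a ∣ f i - g i) :
    a ∣ ∏ i ∈ s, f i - ∏ i ∈ s, g i := by
  classical
  refine Finset.induction_on s (by simp) ?_ h
  intro x s hx ih h
  · rw [Finset.prod_insert hx, Finset.prod_insert hx]
    have h1 : a ∣ f x - g x := h x (Finset.mem_insert_self _ _)
    have h2 : a ∣ ∏ i ∈ s, f i - ∏ i ∈ s, g i :=
      ih fun i hi => h i (Finset.mem_insert_of_mem hi)
    have : f x * ∏ i ∈ s, f i - g x * ∏ i ∈ s, g i
        = (f x - g x) * ∏ i ∈ s, f i + g x * (∏ i ∈ s, f i - ∏ i ∈ s, g i) := by ring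
    rw [this]
    exact dvd_add (h1.mul_right _) (h2.mul_left _)

theorem stmt16 (n : ℕ) (f g : MvPolynomial (Fin 2) ℂ)
    (hf : (∏ l ∈ Finset.Icc 1 n, (-X 0 + C (l : ℂ) * X 1)) ∣ f)
    (hg : (∏ l ∈ Finset.Icc 1 n, (X 0 + C (l : ℂ) * X 1)) ∣ g)
    (hfg : (X 0 : MvPolynomial (Fin 2) ℂ) ∣ g - f) :
    ((∏ l ∈ Finset.Icc 1 n, (X 0 + C (l : ℂ) * X 1)) * ∏ l ∈ Finset.Icc 1 n, (-X 0 + C (l : ℂ) * X 1)) ∣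
      (g * ∏ l ∈ Finset.Icc 1 n, (-X 0 + C (l : ℂ) * X 1)
        - f * ∏ l ∈ Finset.Icc 1 n, (X 0 + C (l : ℂ) * X 1)) ∧
    (X 0 : MvPolynomial (Fin 2) ℂ) ∣
      (g * ∏ l ∈ Finset.Icc 1 n, (-X 0 + C (l : ℂ) * X 1)
        - f * ∏ l ∈ Finset.Icc 1 n, (X 0 + C (l : ℂ) * X 1)) := by
  set P : MvPolynomial (Fin 2) ℂ := ∏ l ∈ Finset.Icc 1 n, (X 0 + C (l : ℂ) * X 1) with hP
  set Q : MvPolynomial (Fin 2) ℂ := ∏ l ∈ Finset.Icc 1 n, (-X 0 + C (l : ℂ) * X 1) with hQ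
  constructor
  · exact dvd_sub (mul_dvd_mul hg dvd_rfl) (by rw [mul_comm P Q]; exact mul_dvd_mul hf dvd_rfl)
  · have hQP : (X 0 : MvPolynomial (Fin 2) ℂ) ∣ Q - P := by
      apply aux_prod_sub_prod
      intro i _
      exact ⟨-2, by ring⟩
    have : g * Q - f * P = (g - f) * Q + f * (Q - P) := by ring
    rw [this]
    exact dvd_add (hfg.mul_right _) (hQP.mul_left _)
end

section
/- Suppose f, g ∈ ℂ[α, c] are homogeneous of degree n with ∏_{l=1}^{n}(-α + lc) ∣ f, ∏_{l=1}^{n}(α + lc) ∣ g, and α ∣ g − f. Then there exists s ∈ ℂ such that f = s · ∏_{l=1}^{n}(-α + lc) and g = s · ∏_{l=1}^{n}(α + lc). -/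
open MvPolynomial

lemma aux_eq_C {m : ℕ} {A p : MvPolynomial (Fin 2) ℂ} (hA : A.IsHomogeneous m)
    (hA0 : A ≠ 0) (h : (A * p).IsHomogeneous m) : p = C (p.coeff 0) := by
  have key : ∀ k : ℕ, k ≠ 0 → homogeneousComponent k p = 0 := by
    intro k hk
    by_cases hk' : k ≤ p.totalDegree
    · have hsum : (∑ i ∈ Finset.range (p.totalDegree + 1), A * homogeneousComponent i p)
          = A * p := by
        rw [← Finset.mul_sum, sum_homogeneousComponent]
      have h0 : homogeneousComponent (m + k) (A * p) = 0 := by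
        rw [homogeneousComponent_of_mem h, if_neg]
        omega
      rw [← hsum, map_sum] at h0
      have heach : ∀ i ∈ Finset.range (p.totalDegree + 1),
          homogeneousComponent (m + k) (A * homogeneousComponent i p)
            = if i = k then A * homogeneousComponent i p else 0 := by
        intro i _
        have hmem : A * homogeneousComponent i p ∈
            homogeneousSubmodule (Fin 2) ℂ (m + i) :=
          hA.mul (homogeneousComponent_isHomogeneous i p)
        rw [homogeneousComponent_of_mem hmem]
        by_cases hik : i = k
        · simp [hik]
        · rw [if_neg (by omega), if_neg hik]
      rw [Finset.sum_congr rfl heach, Finset.sum_ite_eq' _ k, if_pos (by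
        simp [Finset.mem_range]; omega)] at h0
      exact (mul_eq_zero.mp h0).resolve_left hA0
    · exact homogeneousComponent_eq_zero k p (by omega)
  have hp : p = homogeneousComponent 0 p := by
    conv_lhs => rw [← sum_homogeneousComponent p]
    rw [Finset.sum_eq_single 0]
    · intro i _ hi; exact key i hi
    · simp
  rw [hp, homogeneousComponent_zero]
  simp

lemma prod_ne_zero (n : ℕ) (e : ℂ) (_he : e = 1 ∨ e = -1) :
    (∏ l ∈ Finset.Icc 1 n, (C e * X 0 + C (l : ℂ) * X 1) : MvPolynomial (Fin 2) ℂ) ≠ 0 := by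
  apply Finset.prod_ne_zero_iff.mpr
  intro l hl
  intro hzero
  have := congrArg (eval (fun i : Fin 2 => if i = 0 then (0:ℂ) else 1)) hzero
  simp only [eval_add, eval_mul, eval_C, eval_X, map_zero] at this
  norm_num at this
  exact absurd this (by exact_mod_cast Nat.one_le_iff_ne_zero.mp (Finset.mem_Icc.mp hl).1)

theorem stmt17 (n : ℕ) (f g : MvPolynomial (Fin 2) ℂ)
    (hfhom : f.IsHomogeneous n) (hghom : g.IsHomogeneous n)
    (hf : (∏ l ∈ Finset.Icc 1 n, (-X 0 + C (l : ℂ) * X 1)) ∣ f)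
    (hg : (∏ l ∈ Finset.Icc 1 n, (X 0 + C (l : ℂ) * X 1)) ∣ g)
    (hfg : (X 0 : MvPolynomial (Fin 2) ℂ) ∣ g - f) :
    ∃ s : ℂ, f = C s * ∏ l ∈ Finset.Icc 1 n, (-X 0 + C (l : ℂ) * X 1) ∧
             g = C s * ∏ l ∈ Finset.Icc 1 n, (X 0 + C (l : ℂ) * X 1) := by
  set A : MvPolynomial (Fin 2) ℂ := ∏ l ∈ Finset.Icc 1 n, (-X 0 + C (l : ℂ) * X 1) with hA
  set B : MvPolynomial (Fin 2) ℂ := ∏ l ∈ Finset.Icc 1 n, (X 0 + C (l : ℂ) * X 1) with hB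
  have hAhom : A.IsHomogeneous n := by
    have := IsHomogeneous.prod (Finset.Icc 1 n)
      (fun l => (-X 0 + C (l : ℂ) * X 1 : MvPolynomial (Fin 2) ℂ)) (fun _ => 1)
      (fun l _ => ((isHomogeneous_X ℂ 0).neg.add ((isHomogeneous_X ℂ 1).C_mul _)))
    simpa [hA] using this
  have hBhom : B.IsHomogeneous n := by
    have := IsHomogeneous.prod (Finset.Icc 1 n)
      (fun l => (X 0 + C (l : ℂ) * X 1 : MvPolynomial (Fin 2) ℂ)) (fun _ => 1)
      (fun l _ => ((isHomogeneous_X ℂ 0).add ((isHomogeneous_X ℂ 1).C_mul _)))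
    simpa [hB] using this
  have hA0 : A ≠ 0 := by
    have := prod_ne_zero n (-1) (Or.inr rfl)
    simpa [hA, neg_mul] using this
  have hB0 : B ≠ 0 := by
    have := prod_ne_zero n 1 (Or.inl rfl)
    simpa [hB] using this
  obtain ⟨p, hp⟩ := hf
  obtain ⟨q, hq⟩ := hg
  have hpC : p = C (p.coeff 0) := aux_eq_C hAhom hA0 (hp ▸ hfhom)
  have hqC : q = C (q.coeff 0) := aux_eq_C hBhom hB0 (hq ▸ hghom)
  set s := p.coeff 0
  set t := q.coeff 0
  -- evaluate at X 0 := 0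
  obtain ⟨w, hw⟩ := hfg
  have hst : s = t := by
    set v : Fin 2 → MvPolynomial (Fin 2) ℂ := fun i => if i = 0 then 0 else X 1 with hv
    have hprod : (∏ l ∈ Finset.Icc 1 n, (C (l : ℂ) * X 1) : MvPolynomial (Fin 2) ℂ)
        = C (∏ l ∈ Finset.Icc 1 n, (l : ℂ)) * X 1 ^ n := by
      rw [Finset.prod_mul_distrib, map_prod, Finset.prod_const]
      congr 1
      simp [Nat.card_Icc]
    have hAeval : aeval v A = C (∏ l ∈ Finset.Icc 1 n, (l : ℂ)) * X 1 ^ n := by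
      rw [← hprod, hA, map_prod]
      apply Finset.prod_congr rfl
      intro l _
      simp [hv]
    have hBeval : aeval v B = C (∏ l ∈ Finset.Icc 1 n, (l : ℂ)) * X 1 ^ n := by
      rw [← hprod, hB, map_prod]
      apply Finset.prod_congr rfl
      intro l _
      simp [hv]
    have := congrArg (aeval v) hw
    rw [map_sub, map_mul, hq, hp, hpC, hqC, map_mul, map_mul, aeval_C, aeval_C,
      hAeval, hBeval] at this
    have hX0 : aeval v (X 0 : MvPolynomial (Fin 2) ℂ) = 0 := by
      simp [hv]
    rw [hX0, zero_mul, algebraMap_eq] at this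
    have hfac : (∏ l ∈ Finset.Icc 1 n, (l : ℂ)) ≠ 0 := by
      apply Finset.prod_ne_zero_iff.mpr
      intro l hl
      exact_mod_cast Nat.one_le_iff_ne_zero.mp (Finset.mem_Icc.mp hl).1
    have hX1 : (C (∏ l ∈ Finset.Icc 1 n, (l : ℂ)) * X 1 ^ n : MvPolynomial (Fin 2) ℂ) ≠ 0 :=
      mul_ne_zero (fun hc => hfac (by simpa using (C_injective (Fin 2) ℂ) (by rw [hc, map_zero]))) (pow_ne_zero _ (X_ne_zero 1))
    have h2 : (C (∏ l ∈ Finset.Icc 1 n, (l : ℂ)) * X 1 ^ n : MvPolynomial (Fin 2) ℂ) *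
        (C t - C s) = 0 := by linear_combination this
    have h3 := (mul_eq_zero.mp h2).resolve_left hX1
    exact (C_injective _ _ (sub_eq_zero.mp h3)).symm
  refine ⟨s, ?_, ?_⟩
  · rw [hp, hpC, mul_comm]
  · rw [hq, hqC, hst, mul_comm]
end
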